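/- Let I ⊆ ℝ be a nondegenerate interval, let f : ℝ → ℝ be real-analytic, and let (g_n)_{n∈ℕ} be a countable family of real-analytic functions on ℝ. If for every x ∈ I there exists n ∈ ℕ with f(x) = g_n(x), then there exists n ∈ ℕ such that f(x) = g_n(x) for all x ∈ I. -/

import Mathlib

/-- If a real-analytic function `f` agrees at every point of a nondegenerate interval `I`
with some member of a countable family of real-analytic functions `g n`, then `f` agrees
with a single `g n` on all of `I`. -/
theorem stmt0 (I : Set ℝ) (hI : I.OrdConnected)
    (x y : ℝ) (hx : x ∈ I) (hy : y ∈ I) (hxy : x ≠ y)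
    (f : ℝ → ℝ) (g : ℕ → ℝ → ℝ)
    (hf : ∀ t : ℝ, AnalyticAt ℝ f t)
    (hg : ∀ n : ℕ, ∀ t : ℝ, AnalyticAt ℝ (g n) t)
    (h : ∀ t ∈ I, ∃ n : ℕ, f t = g n t) :
    ∃ n : ℕ, ∀ t ∈ I, f t = g n t := by
  -- WLOG x < y
  wlog hlt : x < y generalizing x y
  · exact this y x hy hx hxy.symm (hxy.lt_or_gt.resolve_left hlt)
  -- The interval [x, y] is contained in I
  have hIcc : Set.Icc x y ⊆ I := hI.out hx hy
  -- [x, y] is uncountable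
  have huncount : ¬ (Set.Icc x y).Countable := by
    intro hc
    have := hc.le_aleph0
    rw [Cardinal.mk_Icc_real hlt] at this
    exact absurd this (not_le.mpr Cardinal.aleph0_lt_continuum)
  -- Cover [x, y] by the agreement sets
  have hcover : Set.Icc x y ⊆ ⋃ n : ℕ, {t ∈ Set.Icc x y | f t = g n t} := by
    intro t ht
    obtain ⟨n, hn⟩ := h t (hIcc ht)
    exact Set.mem_iUnion.mpr ⟨n, ht, hn⟩
  -- Some agreement set is uncountable
  have : ∃ n : ℕ, ¬ ({t ∈ Set.Icc x y | f t = g n t}).Countable := by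
    by_contra hall
    push_neg at hall
    exact huncount ((Set.countable_iUnion hall).mono hcover)
  obtain ⟨n, hn⟩ := this
  -- It is infinite, hence has an accumulation point in the compact set [x, y]
  have hinf : ({t ∈ Set.Icc x y | f t = g n t}).Infinite := by
    intro hfin
    exact hn hfin.countable
  obtain ⟨z, hzK, hz⟩ := hinf.exists_accPt_of_subset_isCompact isCompact_Icc
    (Set.sep_subset _ _)
  -- f agrees with g n frequently near z (off z)
  have hfreq : ∃ᶠ t in nhdsWithin z {z}ᶜ, f t = g n t := by
    rw [frequently_nhdsWithin_iff]
    have := accPt_iff_frequently.mp hz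
    exact this.mono fun t ht => ⟨ht.2.2, ht.1⟩
  -- Identity theorem
  have heq : f = g n :=
    AnalyticOnNhd.eq_of_frequently_eq (fun t _ => hf t) (fun t _ => hg n t) hfreq
  exact ⟨n, fun t _ => by rw [heq]⟩
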